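/- Fix p > 0. Let X and w be independent random variables such that X⁻¹ has law Gamma(p, 1/2) (so X is inverse-Gamma distributed) and w has law GIG(p; 1, 1). Then the random variable X/w² + 1/w has the same law as X. Equivalently, writing ν for the pushforward of Gamma(p, 1/2) under x ↦ x⁻¹: Measure.map (fun (x, w) => x/w² + 1/w) (ν ⊗ GIG(p; 1, 1)) = ν. -/

import Mathlib

open MeasureTheory ProbabilityTheory
open scoped ENNReal

/-- Unnormalized density of the generalized inverse Gaussian distribution `GIG(p; a, b)`. -/
noncomputable def gigDensity (p a b : ℝ) (x : ℝ) : ENNReal :=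
  if 0 < x then ENNReal.ofReal (x ^ (p - 1) * Real.exp (-(a * x + b / x) / 2)) else 0

/-- The (scalar) generalized inverse Gaussian distribution `GIG(p; a, b)`. -/
noncomputable def GIG (p a b : ℝ) : Measure ℝ :=
  ((volume.withDensity (gigDensity p a b)) Set.univ)⁻¹ • volume.withDensity (gigDensity p a b)

section Aux

/-- One-dimensional change of variables for lintegrals. -/
theorem lintegral_image_1d {s : Set ℝ} (hs : MeasurableSet s) {f f' : ℝ → ℝ}
    (hf' : ∀ x ∈ s, HasDerivWithinAt f (f' x) s x) (hf : Set.InjOn f s) (g : ℝ → ℝ≥0∞) :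
    ∫⁻ x in f '' s, g x = ∫⁻ x in s, ENNReal.ofReal |f' x| * g (f x) := by
  simpa only [ContinuousLinearMap.det_toSpanSingleton] using
    MeasureTheory.lintegral_image_eq_lintegral_abs_det_fderiv_mul volume hs
      (fun x hx => (hf' x hx).hasFDerivWithinAt) hf g

theorem lint_indicator_pos {A : Set ℝ} (hA : MeasurableSet A) {f : ℝ → ℝ≥0∞}
    (h0 : ∀ x : ℝ, ¬ (0 < x) → f x = 0) :
    ∫⁻ x in A, f x = ∫⁻ x in Set.Ioi (0:ℝ), A.indicator f x := by
  rw [← lintegral_indicator hA, ← lintegral_indicator measurableSet_Ioi]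
  congr 1; funext x
  by_cases hx : (0:ℝ) < x
  · simp [Set.indicator_apply, hx]
  · simp [Set.indicator_apply, hx, h0 x hx]

theorem image_inv_Ioi : (fun x : ℝ => x⁻¹) '' Set.Ioi 0 = Set.Ioi 0 := by
  ext y
  constructor
  · rintro ⟨x, hx, rfl⟩; exact Set.mem_Ioi.mpr (inv_pos.mpr (Set.mem_Ioi.mp hx))
  · intro hy; exact ⟨y⁻¹, Set.mem_Ioi.mpr (inv_pos.mpr (Set.mem_Ioi.mp hy)), inv_inv y⟩

theorem cov_inv (g : ℝ → ℝ≥0∞) :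
    ∫⁻ y in Set.Ioi (0:ℝ), g y
      = ∫⁻ x in Set.Ioi (0:ℝ), ENNReal.ofReal ((x ^ 2)⁻¹) * g x⁻¹ := by
  have h := lintegral_image_1d (f := fun x : ℝ => x⁻¹) (f' := fun x => -(x ^ 2)⁻¹)
      (measurableSet_Ioi (a := (0:ℝ)))
      (fun x hx => (hasDerivAt_inv (ne_of_gt hx)).hasDerivWithinAt)
      (fun a _ b _ hab => inv_injective hab) g
  rw [image_inv_Ioi] at h
  rw [h]
  refine setLIntegral_congr_fun measurableSet_Ioi (fun x hx => ?_)
  rw [abs_neg, abs_of_nonneg (inv_nonneg.mpr (sq_nonneg x))]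

end Aux

section Density

/-- Density of the inverse-Gamma distribution (pushforward of `Gamma(p,1/2)` under inversion). -/
noncomputable def invGammaD (p : ℝ) (y : ℝ) : ℝ≥0∞ :=
  if 0 < y then
    ENNReal.ofReal ((1/2 : ℝ) ^ p / Real.Gamma p * (y ^ (-p - 1) * Real.exp (-(1 / y) / 2)))
  else 0

theorem measurable_invGammaD (p : ℝ) : Measurable (invGammaD p) := by
  unfold invGammaD
  refine Measurable.ite (measurableSet_Ioi (a := (0:ℝ))) ?_ measurable_const
  refine ENNReal.measurable_ofReal.comp (Measurable.const_mul ?_ _)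
  exact (measurable_id.pow_const _).mul
    (Real.measurable_exp.comp ((measurable_const.div measurable_id).neg.div_const _))

theorem invGammaD_ne_top (p y : ℝ) : invGammaD p y ≠ ⊤ := by
  unfold invGammaD; split_ifs <;> simp

theorem measurable_gigDensity (p a b : ℝ) : Measurable (gigDensity p a b) := by
  unfold gigDensity
  refine Measurable.ite (measurableSet_Ioi (a := (0:ℝ))) ?_ measurable_const
  refine ENNReal.measurable_ofReal.comp ?_
  exact (measurable_id.pow_const _).mul
    (Real.measurable_exp.comp
      (((measurable_const.mul measurable_id).add (measurable_const.div measurable_id)).neg.div_const _))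

theorem gigDensity_ne_top (p a b y : ℝ) : gigDensity p a b y ≠ ⊤ := by
  unfold gigDensity; split_ifs <;> simp

theorem rpow_helper {x : ℝ} (hx : 0 < x) (p : ℝ) :
    (x ^ 2)⁻¹ * (x⁻¹) ^ (-p - 1) = x ^ (p - 1) := by
  have h2 : (x ^ 2 : ℝ) = x ^ (2:ℝ) := by
    rw [← Real.rpow_natCast x 2]; norm_num
  rw [h2, ← Real.rpow_neg hx.le, Real.inv_rpow hx.le, ← Real.rpow_neg hx.le, ← Real.rpow_add hx]
  congr 1; ring

end Density

theorem nu_eq (p : ℝ) (hp : 0 < p) :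
    Measure.map (fun x : ℝ => x⁻¹) (gammaMeasure p (1 / 2)) = volume.withDensity (invGammaD p) := by
  have hDz : ∀ y : ℝ, ¬ (0 < y) → invGammaD p y = 0 := fun y hy => if_neg hy
  ext s hs
  rw [Measure.map_apply measurable_inv hs, gammaMeasure,
    withDensity_apply _ (measurable_inv hs), withDensity_apply _ hs]
  -- replace gammaPDF by its `Ioi 0` indicator (a.e. equality; they differ only at `0`)
  have hae : (fun x => gammaPDF p (1/2) x)
      =ᵐ[volume.restrict ((fun x : ℝ => x⁻¹) ⁻¹' s)]
      (Set.Ioi (0:ℝ)).indicator (gammaPDF p (1/2)) := by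
    refine ae_restrict_of_ae ?_
    have h0 : ∀ x : ℝ, x ≠ 0 →
        gammaPDF p (1/2) x = (Set.Ioi (0:ℝ)).indicator (gammaPDF p (1/2)) x := by
      intro x hx
      rcases hx.lt_or_gt with h | h
      · rw [gammaPDF_of_neg h, Set.indicator_of_notMem (by simp [h.not_gt])]
      · exact (Set.indicator_of_mem (Set.mem_Ioi.mpr h) _).symm
    refine measure_mono_null (t := {(0:ℝ)}) (fun x hx => ?_) Real.volume_singleton
    simp only [Set.mem_compl_iff, Set.mem_setOf_eq] at hx
    simp only [Set.mem_singleton_iff]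
    by_contra h
    exact hx (h0 x h)
  rw [lintegral_congr_ae hae,
    lint_indicator_pos (measurable_inv hs) (fun x hx => Set.indicator_of_notMem (by simpa using hx) _),
    lint_indicator_pos hs hDz]
  conv_rhs => rw [cov_inv (s.indicator (invGammaD p))]
  refine setLIntegral_congr_fun measurableSet_Ioi (fun x hx => ?_)
  have hx : (0:ℝ) < x := hx
  by_cases hxs : x⁻¹ ∈ s
  · rw [Set.indicator_of_mem hxs,
      Set.indicator_of_mem (show x ∈ (fun x : ℝ => x⁻¹) ⁻¹' s from hxs),
      Set.indicator_of_mem (Set.mem_Ioi.mpr hx)]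
    rw [invGammaD, if_pos (inv_pos.mpr hx), gammaPDF_of_nonneg hx.le,
      ← ENNReal.ofReal_mul (by positivity)]
    congr 1
    have h1 : (1 : ℝ) / x⁻¹ = x := by rw [one_div, inv_inv]
    rw [h1]
    have h2 : (x ^ 2 : ℝ)⁻¹ * ((1/2 : ℝ) ^ p / Real.Gamma p * ((x⁻¹) ^ (-p - 1) * Real.exp (-x / 2)))
        = (1/2 : ℝ) ^ p / Real.Gamma p * ((x ^ 2)⁻¹ * (x⁻¹) ^ (-p - 1)) * Real.exp (-x / 2) := by
      ring
    rw [h2, rpow_helper hx p, show -(1/2 * x) = -x / 2 by ring]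
  · rw [Set.indicator_of_notMem hxs,
      Set.indicator_of_notMem (show x ∉ (fun x : ℝ => x⁻¹) ⁻¹' s from hxs),
      mul_zero]

section Zfacts

theorem gig_le (p : ℝ) (hp : 0 < p) (x : ℝ) :
    gigDensity p 1 1 x ≤ ENNReal.ofReal (Real.Gamma p * 2 ^ p) * gammaPDF p (1/2) x := by
  unfold gigDensity
  split_ifs with hx
  · rw [gammaPDF_of_nonneg hx.le, ← ENNReal.ofReal_mul (by positivity)]
    apply ENNReal.ofReal_le_ofReal
    have hG : (0:ℝ) < Real.Gamma p := Real.Gamma_pos_of_pos hp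
    have h2 : (2:ℝ) ^ p * (1/2:ℝ) ^ p = 1 := by
      rw [← Real.mul_rpow (by norm_num) (by norm_num)]
      norm_num
    have e1 : Real.Gamma p * 2 ^ p * ((1/2:ℝ) ^ p / Real.Gamma p * x ^ (p-1) * Real.exp (-(1/2 * x)))
        = x ^ (p-1) * Real.exp (-(1/2 * x)) := by
      field_simp
      linear_combination h2
    rw [e1]
    have hfrac : (0:ℝ) < 1 / x := by positivity
    have hexp : Real.exp (-(1 * x + 1 / x) / 2) ≤ Real.exp (-(1/2 * x)) := by
      apply Real.exp_le_exp.mpr; linarith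
    exact mul_le_mul_of_nonneg_left hexp (Real.rpow_nonneg hx.le _)
  · exact zero_le

theorem Z_lt_top (p : ℝ) (hp : 0 < p) : (volume.withDensity (gigDensity p 1 1)) Set.univ < ⊤ := by
  rw [withDensity_apply _ MeasurableSet.univ, Measure.restrict_univ]
  calc ∫⁻ x, gigDensity p 1 1 x
      ≤ ∫⁻ x, ENNReal.ofReal (Real.Gamma p * 2 ^ p) * gammaPDF p (1/2) x :=
        lintegral_mono (gig_le p hp)
    _ = ENNReal.ofReal (Real.Gamma p * 2 ^ p) * ∫⁻ x, gammaPDF p (1/2) x :=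
        lintegral_const_mul' _ _ ENNReal.ofReal_ne_top
    _ = ENNReal.ofReal (Real.Gamma p * 2 ^ p) := by
        rw [lintegral_gammaPDF_eq_one hp (by norm_num : (0:ℝ) < 1/2), mul_one]
    _ < ⊤ := ENNReal.ofReal_lt_top

theorem Z_pos (p : ℝ) : 0 < (volume.withDensity (gigDensity p 1 1)) Set.univ := by
  rw [withDensity_apply _ MeasurableSet.univ, Measure.restrict_univ,
    lintegral_pos_iff_support (measurable_gigDensity p 1 1)]
  have hsub : Set.Ioi (0:ℝ) ⊆ Function.support (gigDensity p 1 1) := by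
    intro x hx
    have hx : (0:ℝ) < x := hx
    simp only [Function.mem_support, gigDensity, if_pos hx]
    exact (ENNReal.ofReal_pos.mpr (by positivity)).ne'
  calc (0:ℝ≥0∞) < volume (Set.Ioi (0:ℝ)) := by simp [Real.volume_Ioi]
    _ ≤ volume (Function.support (gigDensity p 1 1)) := measure_mono hsub

theorem K_eq_Z (p : ℝ) :
    ∫⁻ v in Set.Ioi (0:ℝ), ENNReal.ofReal (v ^ (-p - 1) * Real.exp (-(1 * v + 1 / v) / 2))
      = (volume.withDensity (gigDensity p 1 1)) Set.univ := by
  rw [withDensity_apply _ MeasurableSet.univ, Measure.restrict_univ]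
  have h1 : ∫⁻ w, gigDensity p 1 1 w = ∫⁻ w in Set.Ioi (0:ℝ), gigDensity p 1 1 w := by
    rw [← lintegral_indicator measurableSet_Ioi]
    congr 1; funext w
    by_cases hw : (0:ℝ) < w
    · rw [Set.indicator_of_mem (Set.mem_Ioi.mpr hw)]
    · rw [Set.indicator_of_notMem (by simpa using hw), gigDensity, if_neg hw]
  rw [h1, cov_inv (fun w => gigDensity p 1 1 w)]
  refine setLIntegral_congr_fun measurableSet_Ioi (fun v hv => ?_)
  have hv : (0:ℝ) < v := hv
  rw [gigDensity, if_pos (inv_pos.mpr hv), ← ENNReal.ofReal_mul (by positivity)]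
  congr 1
  have h2 : (v ^ 2 : ℝ)⁻¹ * ((v⁻¹) ^ (p - 1) * Real.exp (-(1 * v⁻¹ + 1 / v⁻¹) / 2))
      = ((v ^ 2)⁻¹ * (v⁻¹) ^ (p - 1)) * Real.exp (-(1 * v⁻¹ + 1 / v⁻¹) / 2) := by ring
  rw [h2]
  have h3 : (v ^ 2 : ℝ)⁻¹ * (v⁻¹) ^ (p - 1) = v ^ (-p - 1) := by
    have := rpow_helper hv (-p)
    rw [show (-(-p : ℝ) - 1) = p - 1 by ring] at this
    rw [this]
  rw [h3]
  congr 2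
  field_simp
  ring

end Zfacts

section CoV

theorem cov_affine {w : ℝ} (hw : 0 < w) (g : ℝ → ℝ≥0∞) :
    ∫⁻ x in Set.Ioi (0:ℝ), g x
      = ∫⁻ y in Set.Ioi w⁻¹, ENNReal.ofReal (w ^ 2) * g (y * w ^ 2 - w) := by
  have hw2 : (0:ℝ) < w ^ 2 := by positivity
  have himg : (fun y : ℝ => y * w ^ 2 - w) '' Set.Ioi w⁻¹ = Set.Ioi 0 := by
    ext x
    simp only [Set.mem_image, Set.mem_Ioi]
    constructor
    · rintro ⟨y, hy, rfl⟩
      have h1 : w⁻¹ * w ^ 2 = w := by field_simp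
      have := mul_lt_mul_of_pos_right hy hw2
      rw [h1] at this
      linarith
    · intro hx
      refine ⟨(x + w) / w ^ 2, ?_, by field_simp; ring⟩
      rw [lt_div_iff₀ hw2]
      have h1 : w⁻¹ * w ^ 2 = w := by field_simp
      rw [h1]; linarith
  have h := lintegral_image_1d (f := fun y : ℝ => y * w ^ 2 - w) (f' := fun _ => w ^ 2)
      (measurableSet_Ioi (a := w⁻¹))
      (fun y _ => ((hasDerivAt_mul_const (w ^ 2)).sub_const w).hasDerivWithinAt)
      (fun a _ b _ hab => by
        have : a * w ^ 2 = b * w ^ 2 := by linarith [sub_left_inj.mp hab]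
        exact mul_right_cancel₀ hw2.ne' this) g
  rw [himg] at h
  rw [h]
  refine setLIntegral_congr_fun measurableSet_Ioi (fun y _ => ?_)
  rw [abs_of_pos hw2]

theorem cov_translate (c : ℝ) (g : ℝ → ℝ≥0∞) :
    ∫⁻ x in Set.Ioi c, g x = ∫⁻ v in Set.Ioi (0:ℝ), g (v + c) := by
  have himg : (fun v : ℝ => v + c) '' Set.Ioi 0 = Set.Ioi c := by
    ext x
    simp only [Set.mem_image, Set.mem_Ioi]
    constructor
    · rintro ⟨v, hv, rfl⟩; linarith
    · intro hx; exact ⟨x - c, by linarith, by ring⟩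
  have h := lintegral_image_1d (f := fun v : ℝ => v + c) (f' := fun _ => (1:ℝ))
      (measurableSet_Ioi (a := (0:ℝ)))
      (fun v _ => ((hasDerivAt_id v).add_const c).hasDerivWithinAt)
      (fun a _ b _ hab => by linarith [add_right_cancel hab]) g
  rw [himg] at h
  rw [h]
  simp

theorem prod_smul_right (μ ν : Measure ℝ) [SFinite μ] [SFinite ν] (c : ℝ≥0∞) :
    μ.prod (c • ν) = c • (μ.prod ν) := by
  ext s hs
  rw [Measure.smul_apply, Measure.prod_apply_symm hs, Measure.prod_apply_symm hs,
    lintegral_smul_measure, smul_eq_mul]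

end CoV

theorem key_alg (p : ℝ) (hp : 0 < p) {y v : ℝ} (hy : 0 < y) (hv : 0 < v) :
    gigDensity p 1 1 (v + y⁻¹) * (ENNReal.ofReal ((v + y⁻¹) ^ 2) *
        invGammaD p (y * (v + y⁻¹) ^ 2 - (v + y⁻¹)))
      = invGammaD p y * ENNReal.ofReal (v ^ (-p - 1) * Real.exp (-(1 * v + 1 / v) / 2)) := by
  have hw : 0 < v + y⁻¹ := add_pos hv (inv_pos.mpr hy)
  set w := v + y⁻¹ with hwdef
  have harg : y * w ^ 2 - w = w * (y * v) := by
    rw [hwdef]; field_simp; ring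
  have hargpos : 0 < w * (y * v) := mul_pos hw (mul_pos hy hv)
  have hCnn : (0:ℝ) ≤ (1/2 : ℝ) ^ p / Real.Gamma p :=
    div_nonneg (Real.rpow_nonneg (by norm_num) p) (Real.Gamma_pos_of_pos hp).le
  rw [harg, gigDensity, if_pos hw, invGammaD, if_pos hargpos, invGammaD, if_pos hy,
    ← ENNReal.ofReal_mul (by positivity),
    ← ENNReal.ofReal_mul
      (mul_nonneg (Real.rpow_nonneg hw.le _) (Real.exp_pos _).le),
    ← ENNReal.ofReal_mul
      (mul_nonneg hCnn (mul_nonneg (Real.rpow_nonneg hy.le _) (Real.exp_pos _).le))]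
  congr 1
  have hpow : (w * (y * v)) ^ (-p - 1) = w ^ (-p - 1) * (y ^ (-p - 1) * v ^ (-p - 1)) := by
    rw [Real.mul_rpow hw.le (mul_pos hy hv).le, Real.mul_rpow hy.le hv.le]
  have h2 : (w : ℝ) ^ 2 = w ^ (2:ℝ) := by
    rw [← Real.rpow_natCast w 2]; norm_num
  have hwpow : w ^ (p - 1) * (w ^ (2:ℝ) * w ^ (-p - 1)) = 1 := by
    rw [← Real.rpow_add hw, ← Real.rpow_add hw,
      show (p - 1) + (2 + (-p - 1)) = 0 by ring, Real.rpow_zero]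
  have hexp : Real.exp (-(1 * w + 1 / w) / 2) * Real.exp (-(1 / (w * (y * v))) / 2)
      = Real.exp (-(1 / y) / 2) * Real.exp (-(1 * v + 1 / v) / 2) := by
    rw [← Real.exp_add, ← Real.exp_add]
    congr 1
    rw [hwdef]
    field_simp
    ring
  rw [hpow, h2]
  linear_combination
    ((1/2 : ℝ) ^ p / Real.Gamma p * (y ^ (-p - 1) * v ^ (-p - 1)) *
      (Real.exp (-(1 * w + 1 / w) / 2) * Real.exp (-(1 / (w * (y * v))) / 2))) * hwpow
    + ((1/2 : ℝ) ^ p / Real.Gamma p * (y ^ (-p - 1) * v ^ (-p - 1))) * hexp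

theorem stmt_8 (p : ℝ) (hp : 0 < p) (ν : Measure ℝ)
    (hν : ν = Measure.map (fun x : ℝ => x⁻¹) (gammaMeasure p (1 / 2))) :
    Measure.map (fun q : ℝ × ℝ => q.1 / q.2 ^ 2 + 1 / q.2) (ν.prod (GIG p 1 1)) = ν := by
  classical
  subst hν
  rw [nu_eq p hp]
  have hZpos := Z_pos p
  have hZtop := Z_lt_top p hp
  have hDz : ∀ x : ℝ, ¬ (0 < x) → invGammaD p x = 0 := fun x hx => if_neg hx
  have hT : Measurable (fun q : ℝ × ℝ => q.1 / q.2 ^ 2 + 1 / q.2) :=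
    (measurable_fst.div (measurable_snd.pow_const 2)).add (measurable_const.div measurable_snd)
  ext s hs
  rw [Measure.map_apply hT hs, GIG, prod_smul_right _ _ _, Measure.smul_apply, smul_eq_mul,
    Measure.prod_apply_symm (hT hs),
    lintegral_withDensity_eq_lintegral_mul_non_measurable _ (measurable_gigDensity p 1 1)
      (Filter.Eventually.of_forall fun w => (gigDensity_ne_top p 1 1 w).lt_top)]
  set G : ℝ × ℝ → ℝ≥0∞ :=
    Set.indicator {q : ℝ × ℝ | q.2⁻¹ < q.1 ∧ q.1 ∈ s}
      (fun q => gigDensity p 1 1 q.2 *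
        (ENNReal.ofReal (q.2 ^ 2) * invGammaD p (q.1 * q.2 ^ 2 - q.2))) with hGdef
  have hGmeas : Measurable G := by
    refine Measurable.indicator ?_ ?_
    · exact ((measurable_gigDensity p 1 1).comp measurable_snd).mul
        ((ENNReal.measurable_ofReal.comp (measurable_snd.pow_const 2)).mul
          ((measurable_invGammaD p).comp
            ((measurable_fst.mul (measurable_snd.pow_const 2)).sub measurable_snd)))
    · exact (measurableSet_lt (measurable_snd.inv) measurable_fst).inter (measurable_fst hs)
  have hstep : ∀ w : ℝ,
      (gigDensity p 1 1 * fun w => (volume.withDensity (invGammaD p))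
        ((fun x => (x, w)) ⁻¹' ((fun q : ℝ × ℝ => q.1 / q.2 ^ 2 + 1 / q.2) ⁻¹' s))) w
      = ∫⁻ y, G (y, w) := by
    intro w
    simp only [Pi.mul_apply]
    by_cases hw : (0:ℝ) < w
    · have hsec : ((fun x : ℝ => (x, w)) ⁻¹' ((fun q : ℝ × ℝ => q.1 / q.2 ^ 2 + 1 / q.2) ⁻¹' s))
          = (fun x : ℝ => x / w ^ 2 + 1 / w) ⁻¹' s := rfl
      have hAmeas : MeasurableSet ((fun x : ℝ => x / w ^ 2 + 1 / w) ⁻¹' s) :=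
        ((measurable_id.div_const _).add_const _) hs
      rw [hsec, withDensity_apply _ hAmeas,
        lint_indicator_pos hAmeas hDz, cov_affine hw,
        ← lintegral_const_mul' _ _ (gigDensity_ne_top p 1 1 w),
        ← lintegral_indicator measurableSet_Ioi]
      refine lintegral_congr fun y => ?_
      by_cases h1 : w⁻¹ < y
      · have hyid : (y * w ^ 2 - w) / w ^ 2 + 1 / w = y := by field_simp; ring
        by_cases h2 : y ∈ s
        · have hmem : (y * w ^ 2 - w) ∈ (fun x : ℝ => x / w ^ 2 + 1 / w) ⁻¹' s := by
            simp only [Set.mem_preimage]; rw [hyid]; exact h2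
          rw [Set.indicator_of_mem (Set.mem_Ioi.mpr h1), Set.indicator_of_mem hmem, hGdef,
            Set.indicator_of_mem (show ((y, w) : ℝ × ℝ) ∈ {q : ℝ × ℝ | q.2⁻¹ < q.1 ∧ q.1 ∈ s} from ⟨h1, h2⟩)]
        · have hmem : (y * w ^ 2 - w) ∉ (fun x : ℝ => x / w ^ 2 + 1 / w) ⁻¹' s := by
            simp only [Set.mem_preimage]; rw [hyid]; exact h2
          rw [Set.indicator_of_mem (Set.mem_Ioi.mpr h1), Set.indicator_of_notMem hmem, hGdef,
            Set.indicator_of_notMem (fun hc => h2 hc.2)]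
          simp
      · rw [Set.indicator_of_notMem (by simpa using h1), hGdef,
          Set.indicator_of_notMem (fun hc => h1 hc.1)]
    · have hgig0 : gigDensity p 1 1 w = 0 := if_neg hw
      have hG0 : ∀ y, G (y, w) = 0 := by
        intro y
        rw [hGdef, Set.indicator_apply]
        split_ifs <;> simp [hgig0]
      rw [hgig0, zero_mul]
      simp [hG0]
  rw [lintegral_congr hstep,
    lintegral_lintegral_swap (f := fun w y => G (y, w))
      (by exact (hGmeas.comp measurable_swap).aemeasurable)]
  have hinner : ∀ y : ℝ, (∫⁻ w, G (y, w)) =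
      s.indicator (fun y => invGammaD p y *
        (volume.withDensity (gigDensity p 1 1)) Set.univ) y := by
    intro y
    by_cases h2 : y ∈ s
    · by_cases hy : (0:ℝ) < y
      · have hptw : ∀ w : ℝ, G (y, w) = (Set.Ioi y⁻¹).indicator
            (fun w => gigDensity p 1 1 w *
              (ENNReal.ofReal (w ^ 2) * invGammaD p (y * w ^ 2 - w))) w := by
          intro w
          by_cases hw1 : y⁻¹ < w
          · have hw : (0:ℝ) < w := lt_trans (inv_pos.mpr hy) hw1
            have hcond : w⁻¹ < y := (inv_lt_comm₀ hw hy).mpr hw1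
            rw [hGdef, Set.indicator_of_mem
                (show ((y, w) : ℝ × ℝ) ∈ {q : ℝ × ℝ | q.2⁻¹ < q.1 ∧ q.1 ∈ s} from ⟨hcond, h2⟩),
              Set.indicator_of_mem (Set.mem_Ioi.mpr hw1)]
          · rw [Set.indicator_of_notMem (by simpa using hw1), hGdef, Set.indicator_apply]
            split_ifs with hcond
            · have hw0 : ¬ (0:ℝ) < w := by
                intro hw
                exact hw1 ((inv_lt_comm₀ hw hy).mp hcond.1)
              rw [gigDensity, if_neg hw0, zero_mul]
            · rfl
        calc ∫⁻ w, G (y, w)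
            = ∫⁻ w in Set.Ioi y⁻¹, gigDensity p 1 1 w *
              (ENNReal.ofReal (w ^ 2) * invGammaD p (y * w ^ 2 - w)) := by
              rw [lintegral_congr hptw, lintegral_indicator measurableSet_Ioi]
          _ = ∫⁻ v in Set.Ioi (0:ℝ), gigDensity p 1 1 (v + y⁻¹) *
              (ENNReal.ofReal ((v + y⁻¹) ^ 2) * invGammaD p (y * (v + y⁻¹) ^ 2 - (v + y⁻¹))) :=
              cov_translate y⁻¹ _
          _ = ∫⁻ v in Set.Ioi (0:ℝ), invGammaD p y *
              ENNReal.ofReal (v ^ (-p - 1) * Real.exp (-(1 * v + 1 / v) / 2)) :=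
              setLIntegral_congr_fun measurableSet_Ioi
                (fun v hv => key_alg p hp hy hv)
          _ = invGammaD p y * ∫⁻ v in Set.Ioi (0:ℝ),
              ENNReal.ofReal (v ^ (-p - 1) * Real.exp (-(1 * v + 1 / v) / 2)) :=
              lintegral_const_mul' _ _ (invGammaD_ne_top p y)
          _ = invGammaD p y * (volume.withDensity (gigDensity p 1 1)) Set.univ := by
              rw [K_eq_Z]
          _ = s.indicator (fun y => invGammaD p y *
              (volume.withDensity (gigDensity p 1 1)) Set.univ) y := by
              rw [Set.indicator_of_mem h2]
      · have hG0 : ∀ w, G (y, w) = 0 := by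
          intro w
          rw [hGdef, Set.indicator_apply]
          split_ifs with hcond
          · have hw0 : ¬ (0:ℝ) < w := by
              intro hw
              exact hy (lt_trans (inv_pos.mpr hw) hcond.1)
            rw [gigDensity, if_neg hw0, zero_mul]
          · rfl
        rw [Set.indicator_of_mem h2]
        simp [hG0, invGammaD, if_neg hy]
    · have hG0 : ∀ w, G (y, w) = 0 := fun w => by
        rw [hGdef, Set.indicator_of_notMem (fun hc => h2 hc.2)]
      rw [Set.indicator_of_notMem h2]
      simp [hG0]
  rw [lintegral_congr hinner, lintegral_indicator hs,
    lintegral_mul_const' _ _ hZtop.ne, withDensity_apply _ hs,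
    mul_comm (∫⁻ y in s, invGammaD p y) _, ← mul_assoc,
    ENNReal.inv_mul_cancel hZpos.ne' hZtop.ne, one_mul]
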